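/- Suppose there exists a sequence (x_m)_{m∈ℕ} ⊂ X such that N(x_m)/(M₁(x_m))² → 0 as m → ∞, where N(x) := ∑_{y≠x} k(x,y)k(y,x). Then there does not exist any n ∈ [1,∞) such that L satisfies CD_Υ(0,n). -/

import Mathlib

open Real Filter MeasureTheory Set

/-- `Υ(r) = e^r - r - 1`. -/
noncomputable def Ups (r : ℝ) : ℝ := Real.exp r - r - 1

/-- `M₁(x) = ∑_{y ≠ x} k(x,y)`. -/
noncomputable def M1fn {X : Type*} (k : X → X → ℝ) (x : X) : ℝ :=
  ∑' y : {y : X // y ≠ x}, k x y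

/-- The Markov generator `L f(x) = ∑_y k(x,y)(f(y) - f(x))`. -/
noncomputable def genOp {X : Type*} (k : X → X → ℝ) (f : X → ℝ) (x : X) : ℝ :=
  ∑' y, k x y * (f y - f x)

/-- `Ψ_Υ(f)(x) = ∑_y k(x,y) Υ(f(y) - f(x))`. -/
noncomputable def psiUps {X : Type*} (k : X → X → ℝ) (f : X → ℝ) (x : X) : ℝ :=
  ∑' y, k x y * Ups (f y - f x)

/-- `B_{Υ'}(f,g)(x) = ∑_y k(x,y) Υ'(f(y)-f(x)) (g(y)-g(x))`. -/
noncomputable def bUps {X : Type*} (k : X → X → ℝ) (f g : X → ℝ) (x : X) : ℝ :=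
  ∑' y, k x y * (Real.exp (f y - f x) - 1) * (g y - g x)

/-- `Ψ_{2,Υ}(f) = (1/2)(L Ψ_Υ(f) - B_{Υ'}(f, L f))`. -/
noncomputable def psi2Ups {X : Type*} (k : X → X → ℝ) (f : X → ℝ) (x : X) : ℝ :=
  (1/2) * (genOp k (psiUps k f) x - bUps k f (genOp k f) x)

/-- Boundedness of a real-valued function on the state space. -/
def BddFun {X : Type*} (f : X → ℝ) : Prop := ∃ B : ℝ, ∀ x, |f x| ≤ B

/-- The standing assumptions on the transition rates: nonnegative off-diagonal rates,
`M₁(x) < ∞` (summability), `k(x,x) = -M₁(x)`, and `M₂(x) < ∞`. -/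
def KernelSetting {X : Type*} (k : X → X → ℝ) : Prop :=
  (∀ x y, x ≠ y → 0 ≤ k x y) ∧
  (∀ x : X, Summable fun y : {y : X // y ≠ x} => k x y) ∧
  (∀ x : X, k x x = -M1fn k x) ∧
  (∀ x : X, Summable fun y : {y : X // y ≠ x} => k x y * M1fn k y)

/-- A CD-function: continuous and nonnegative on `[0,∞)` with `F(0) = 0`, `F(r)/r`
strictly increasing on `(0,∞)` and `1/F` integrable at `∞`. -/
def IsCDFunction (F : ℝ → ℝ) : Prop :=
  ContinuousOn F (Ici 0) ∧ F 0 = 0 ∧ (∀ r : ℝ, 0 ≤ r → 0 ≤ F r) ∧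
  StrictMonoOn (fun r => F r / r) (Ioi 0) ∧
  ∃ c : ℝ, 0 < c ∧ IntegrableOn (fun r => 1 / F r) (Ioi c)

/-- The trivial extension `F₀` of `F : [0,∞) → [0,∞)` by `0` on `(-∞,0)`. -/
noncomputable def trivExt (F : ℝ → ℝ) : ℝ → ℝ := fun r => if 0 ≤ r then F r else 0

/-- The condition `CD_Υ(κ,F)` at a point `x`. -/
def CDUpsAt {X : Type*} (k : X → X → ℝ) (κ : ℝ) (F : ℝ → ℝ) (x : X) : Prop :=
  ∀ f : X → ℝ, BddFun f →
    κ * psiUps k f x + trivExt F (-genOp k f x) ≤ psi2Ups k f x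

/-- The condition `CD_Υ(κ,F)` (at every point). -/
def CDUps {X : Type*} (k : X → X → ℝ) (κ : ℝ) (F : ℝ → ℝ) : Prop :=
  ∀ x : X, CDUpsAt k κ F x

/-- `N(x) = ∑_{y ≠ x} k(x,y)k(y,x)`. -/
noncomputable def Nfn {X : Type*} (k : X → X → ℝ) (x : X) : ℝ :=
  ∑' y : {y : X // y ≠ x}, k x y * k y x


section Aux
variable {X : Type*} {k : X → X → ℝ}

lemma Ups_zero : Ups 0 = 0 := by simp [Ups]

lemma tsum_off (x₀ : X) (g : X → ℝ) (h : g x₀ = 0) :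
    ∑' y, g y = ∑' y : {y : X // y ≠ x₀}, g y := by
  rw [← tsum_subtype_eq_of_support_subset (s := {y : X | y ≠ x₀}) (f := g)]
  · rfl
  · exact fun y hy hyx => (Function.mem_support.mp hy) (hyx ▸ h)

lemma k_le_M1 (hnn : ∀ x y, x ≠ y → 0 ≤ k x y)
    (hsum : ∀ x : X, Summable fun y : {y : X // y ≠ x} => k x y)
    {y x₀ : X} (h : y ≠ x₀) : k y x₀ ≤ M1fn k y := by
  have := Summable.le_tsum (hsum y) ⟨x₀, Ne.symm h⟩
    (fun b _ => hnn y b (Ne.symm b.2))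
  simpa [M1fn] using this

lemma summable_kk (hnn : ∀ x y, x ≠ y → 0 ≤ k x y)
    (hsum : ∀ x : X, Summable fun y : {y : X // y ≠ x} => k x y)
    (hsum2 : ∀ x : X, Summable fun y : {y : X // y ≠ x} => k x y * M1fn k y)
    (x₀ : X) : Summable (fun y : {y : X // y ≠ x₀} => k x₀ y * k y x₀) := by
  refine Summable.of_nonneg_of_le (fun y => mul_nonneg (hnn x₀ y (Ne.symm y.2))
    (hnn y x₀ y.2)) (fun y => ?_) (hsum2 x₀)
  exact mul_le_mul_of_nonneg_left (k_le_M1 hnn hsum y.2) (hnn x₀ y (Ne.symm y.2))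

lemma main_ineq (hnn : ∀ x y, x ≠ y → 0 ≤ k x y)
    (hsum : ∀ x : X, Summable fun y : {y : X // y ≠ x} => k x y)
    (hsum2 : ∀ x : X, Summable fun y : {y : X // y ≠ x} => k x y * M1fn k y)
    (x₀ : X) {n c : ℝ} (hn : 1 ≤ n) (hc : 0 < c) (hc2 : c ^ 2 = 2 * n)
    (hCD : CDUpsAt k 0 (fun r => r ^ 2 / n) x₀) :
    3 * (M1fn k x₀) ^ 2 ≤
      (Real.exp c - 1 - c * Real.exp (-c)) * Nfn k x₀ := by
  classical
  set M := M1fn k x₀ with hM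
  set N := Nfn k x₀ with hN
  set f : X → ℝ := fun y => if y = x₀ then c else 0 with hf
  have hfx₀ : f x₀ = c := by simp [hf]
  have hfne : ∀ y : X, y ≠ x₀ → f y = 0 := fun y hy => by simp [hf, hy]
  have hbdd : BddFun f := by
    refine ⟨c, fun y => ?_⟩
    by_cases hy : y = x₀ <;> simp [hf, hy, abs_of_nonneg hc.le, hc.le]
  -- L f x₀
  have hLfx : genOp k f x₀ = -(c * M) := by
    rw [genOp, tsum_off x₀ _ (by simp)]
    have : ∀ y : {y : X // y ≠ x₀}, k x₀ y * (f y - f x₀) = -c * k x₀ y := by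
      intro y; rw [hfne y y.2, hfx₀]; ring
    rw [tsum_congr this, tsum_mul_left]
    rw [hM, M1fn]; ring
  -- L f y for y ≠ x₀
  have hLfy : ∀ y : X, y ≠ x₀ → genOp k f y = k y x₀ * c := by
    intro y hy
    rw [genOp, tsum_eq_single x₀ (fun z hz => by rw [hfne z hz, hfne y hy]; ring)]
    rw [hfx₀, hfne y hy]; ring
  -- Ψ_Υ f x₀
  have hPx : psiUps k f x₀ = Ups (-c) * M := by
    rw [psiUps, tsum_off x₀ _ (by simp [Ups_zero])]
    have : ∀ y : {y : X // y ≠ x₀},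
        k x₀ y * Ups (f y - f x₀) = Ups (-c) * k x₀ y := by
      intro y; rw [hfne y y.2, hfx₀, zero_sub]; ring
    rw [tsum_congr this, tsum_mul_left, hM, M1fn]
  -- Ψ_Υ f y for y ≠ x₀
  have hPy : ∀ y : X, y ≠ x₀ → psiUps k f y = k y x₀ * Ups c := by
    intro y hy
    rw [psiUps, tsum_eq_single x₀
      (fun z hz => by rw [hfne z hz, hfne y hy, sub_self, Ups_zero, mul_zero])]
    rw [hfx₀, hfne y hy, sub_zero]
  -- L Ψ_Υ f x₀
  have hLP : genOp k (psiUps k f) x₀ = Ups c * N - Ups (-c) * M * M := by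
    rw [genOp, tsum_off x₀ _ (by simp)]
    have : ∀ y : {y : X // y ≠ x₀},
        k x₀ y * (psiUps k f y - psiUps k f x₀) =
          Ups c * (k x₀ y * k y x₀) - (Ups (-c) * M) * k x₀ y := by
      intro y; rw [hPy y y.2, hPx]; ring
    rw [tsum_congr this,
      Summable.tsum_sub ((summable_kk hnn hsum hsum2 x₀).mul_left _)
        ((hsum x₀).mul_left _),
      tsum_mul_left, tsum_mul_left]
    rw [hM, hN, M1fn, Nfn]
  -- B_{Υ'} f (L f) x₀
  have hB : bUps k f (genOp k f) x₀ =
      (Real.exp (-c) - 1) * c * N + (Real.exp (-c) - 1) * c * M * M := by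
    rw [bUps, tsum_off x₀ _ (by simp)]
    have : ∀ y : {y : X // y ≠ x₀},
        k x₀ y * (Real.exp (f y - f x₀) - 1) * (genOp k f y - genOp k f x₀) =
          ((Real.exp (-c) - 1) * c) * (k x₀ y * k y x₀) +
            ((Real.exp (-c) - 1) * c * M) * k x₀ y := by
      intro y
      rw [hfne y y.2, hfx₀, hLfy y y.2, hLfx, zero_sub]; ring
    rw [tsum_congr this,
      Summable.tsum_add ((summable_kk hnn hsum hsum2 x₀).mul_left _)
        ((hsum x₀).mul_left _),
      tsum_mul_left, tsum_mul_left]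
    rw [hM, hN, M1fn, Nfn]
  -- apply CD
  have hcd := hCD f hbdd
  rw [psi2Ups, hLP, hB, hLfx, zero_mul, zero_add, neg_neg] at hcd
  have hM0 : 0 ≤ M := by
    rw [hM, M1fn]; exact tsum_nonneg (fun y => hnn x₀ y (Ne.symm y.2))
  have htriv : trivExt (fun r => r ^ 2 / n) (c * M) = (c * M) ^ 2 / n := by
    rw [trivExt, if_pos (mul_nonneg hc.le hM0)]
  rw [htriv] at hcd
  have hn0 : (0 : ℝ) < n := lt_of_lt_of_le one_pos hn
  have hlhs : (c * M) ^ 2 / n = 2 * M ^ 2 := by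
    rw [mul_pow, hc2]; field_simp
  rw [hlhs] at hcd
  have hexp : (0 : ℝ) < Real.exp (-c) := Real.exp_pos _
  have hM2 : (0 : ℝ) ≤ M ^ 2 := sq_nonneg M
  simp only [Ups] at hcd
  nlinarith [mul_nonneg (mul_nonneg (by positivity : (0:ℝ) ≤ 1 + c) hexp.le) hM2]

end Aux

/-- Proposition 2.12: if `N(x_m)/M₁(x_m)² → 0` along a sequence, then `CD_Υ(0,n)`
fails for every finite `n`. -/
theorem stmt_9 {X : Type*} [Countable X] (k : X → X → ℝ) (hk : KernelSetting k)
    (x : ℕ → X) (hpos : ∀ m, 0 < M1fn k (x m))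
    (hlim : Tendsto (fun m => Nfn k (x m) / (M1fn k (x m)) ^ 2) atTop (nhds 0)) :
    ¬ ∃ n : ℝ, 1 ≤ n ∧ CDUps k 0 (fun r => r ^ 2 / n) := by
  rintro ⟨n, hn, hCD⟩
  obtain ⟨hnn, hsum, hdiag, hsum2⟩ := hk
  have hn0 : (0 : ℝ) < n := lt_of_lt_of_le one_pos hn
  set c := Real.sqrt (2 * n) with hcdef
  have hc : 0 < c := Real.sqrt_pos.mpr (by positivity)
  have hc2 : c ^ 2 = 2 * n := Real.sq_sqrt (by positivity)
  set a := Real.exp c - 1 - c * Real.exp (-c) with ha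
  have hapos : 0 < a := by
    have h1 : c + 1 < Real.exp c := Real.add_one_lt_exp (ne_of_gt hc)
    have h2 : Real.exp (-c) < 1 := Real.exp_lt_one_iff.mpr (by linarith)
    nlinarith
  have key : ∀ m, 3 / a ≤ Nfn k (x m) / (M1fn k (x m)) ^ 2 := by
    intro m
    have hineq := main_ineq hnn hsum hsum2 (x m) hn hc hc2 (hCD (x m))
    have hMpos : (0 : ℝ) < (M1fn k (x m)) ^ 2 := pow_pos (hpos m) 2
    rw [div_le_div_iff₀ hapos hMpos]
    nlinarith
  have hev : ∀ᶠ m in atTop, Nfn k (x m) / (M1fn k (x m)) ^ 2 < 3 / a :=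
    hlim.eventually (gt_mem_nhds (by positivity))
  obtain ⟨m, hm⟩ := hev.exists
  exact absurd (key m) (not_le.mpr hm)
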